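/- Let x^R ∈ C[0,1] be the Takagi–Landsberg function with Faber–Schauder coefficients θ_{m,k} = 2^{m(1/2−R)} for all m ≥ 0, 0 ≤ k ≤ 2^m − 1 (and x^R(0) = x^R(1) = 0). Then for y^R(t) = ∫₀ᵗ x^R(s) ds, the coefficients ϑ_{n,k} computed from y^R equal 2^{n(1/2−R)} for all n and k, and consequently R̂_n(y^R) = R for every n ∈ ℕ. -/

import Mathlib

open Finset

/-- The basic Faber–Schauder hat function. -/
noncomputable def e00 (t : ℝ) : ℝ := max (min t (1 - t)) 0

/-- The Faber–Schauder function `e_{m,k}`. -/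
noncomputable def emk (m k : ℕ) (t : ℝ) : ℝ := 2 ^ (-(m : ℝ) / 2) * e00 (2 ^ m * t - k)

/-- The Takagi–Landsberg function with parameter `R`. -/
noncomputable def takagiLandsberg (R : ℝ) (t : ℝ) : ℝ :=
  ∑' m : ℕ, ∑ k ∈ range (2 ^ m), 2 ^ ((m : ℝ) * (1 / 2 - R)) * emk m k t

/-- Antiderivative. -/
noncomputable def yR (R : ℝ) (t : ℝ) : ℝ := ∫ s in (0 : ℝ)..t, takagiLandsberg R s

noncomputable def vartheta (y : ℝ → ℝ) (n k : ℕ) : ℝ :=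
  2 ^ ((3 * (n : ℝ)) / 2 + 3) *
    (y ((4 * k) / 2 ^ (n + 2)) - 2 * y ((4 * k + 1) / 2 ^ (n + 2))
      + 2 * y ((4 * k + 3) / 2 ^ (n + 2)) - y ((4 * k + 4) / 2 ^ (n + 2)))

noncomputable def Rhat (y : ℝ → ℝ) (n : ℕ) : ℝ :=
  1 - (1 / (n : ℝ)) * Real.logb 2 (Real.sqrt (∑ k ∈ range (2 ^ n), (vartheta y n k) ^ 2))

/-- Antiderivative of `e00`. -/
noncomputable def Efs (u : ℝ) : ℝ :=
  if u ≤ 0 then 0 else if u ≤ 1/2 then u^2/2 else if u ≤ 1 then 1/4 - (1-u)^2/2 else 1/4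

lemma e00_nonneg (u : ℝ) : 0 ≤ e00 u := le_max_right _ _

lemma e00_le_half (u : ℝ) : e00 u ≤ 1/2 := by
  unfold e00
  rcases le_total u (1/2) with h | h
  · exact max_le (le_trans (min_le_left _ _) h) (by norm_num)
  · exact max_le (le_trans (min_le_right _ _) (by linarith)) (by norm_num)

lemma e00_of_nonpos {u : ℝ} (h : u ≤ 0) : e00 u = 0 := by
  unfold e00
  rw [max_eq_right]
  exact le_trans (min_le_left _ _) h

lemma e00_of_one_le {u : ℝ} (h : 1 ≤ u) : e00 u = 0 := by
  unfold e00
  rw [max_eq_right]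
  exact le_trans (min_le_right _ _) (by linarith)

lemma e00_lo {u : ℝ} (h0 : 0 ≤ u) (h1 : u ≤ 1/2) : e00 u = u := by
  unfold e00
  rw [min_eq_left (by linarith), max_eq_left h0]

lemma e00_hi {u : ℝ} (h0 : 1/2 ≤ u) (h1 : u ≤ 1) : e00 u = 1 - u := by
  unfold e00
  rw [min_eq_right (by linarith), max_eq_left (by linarith)]

lemma continuous_e00 : Continuous e00 :=
  ((continuous_id.min (continuous_const.sub continuous_id)).max continuous_const)

lemma Efs_of_nonpos {u : ℝ} (h : u ≤ 0) : Efs u = 0 := by simp [Efs, h]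

lemma Efs_of_one_le {u : ℝ} (h : 1 ≤ u) : Efs u = 1/4 := by
  unfold Efs; split_ifs <;> first | rfl | nlinarith

lemma Efs_nonneg (u : ℝ) : 0 ≤ Efs u := by
  unfold Efs; split_ifs <;> nlinarith

lemma Efs_le (u : ℝ) : Efs u ≤ 1/4 := by
  unfold Efs; split_ifs <;> nlinarith

lemma Efs_lo {u : ℝ} (h0 : 0 ≤ u) (h1 : u ≤ 1/2) : Efs u = u^2/2 := by
  unfold Efs; split_ifs <;> first | rfl | nlinarith

lemma Efs_hi {u : ℝ} (h0 : 1/2 ≤ u) (h1 : u ≤ 1) : Efs u = 1/4 - (1-u)^2/2 := by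
  unfold Efs; split_ifs <;> first | rfl | nlinarith

lemma hasDerivAt_Efs (u : ℝ) : HasDerivAt Efs (e00 u) u := by
  have P1 : ∀ x : ℝ, HasDerivAt (fun v : ℝ => v^2/2) x x := by
    intro x
    have := ((hasDerivAt_pow 2 x).div_const 2)
    simpa using this
  have P2 : ∀ x : ℝ, HasDerivAt (fun v : ℝ => 1/4 - (1-v)^2/2) (1-x) x := by
    intro x
    have h : HasDerivAt (fun v : ℝ => 1 - v) (-1) x := by
      exact (hasDerivAt_id x).const_sub (1:ℝ)
    have := (((h.pow 2).div_const 2)).const_sub (1/4)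
    refine this.congr_deriv ?_
    simp [mul_comm]; ring
  have E0 : Set.EqOn Efs (fun _ => (0:ℝ)) (Set.Iic 0) := fun v hv => Efs_of_nonpos hv
  have E1 : Set.EqOn Efs (fun v => v^2/2) (Set.Icc 0 (1/2)) := fun v hv => Efs_lo hv.1 hv.2
  have E2 : Set.EqOn Efs (fun v => 1/4 - (1-v)^2/2) (Set.Icc (1/2) 1) := fun v hv =>
    Efs_hi hv.1 hv.2
  have E3 : Set.EqOn Efs (fun _ => (1/4:ℝ)) (Set.Ici 1) := fun v hv => Efs_of_one_le hv
  -- within-set derivative builders (for x in the respective set)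
  have W0 : ∀ x ∈ Set.Iic (0:ℝ), HasDerivWithinAt Efs 0 (Set.Iic 0) x := fun x hx =>
    ((hasDerivAt_const x (0:ℝ)).hasDerivWithinAt).congr E0 (E0 hx)
  have W1 : ∀ x ∈ Set.Icc (0:ℝ) (1/2), HasDerivWithinAt Efs x (Set.Icc 0 (1/2)) x :=
    fun x hx => ((P1 x).hasDerivWithinAt).congr E1 (E1 hx)
  have W2 : ∀ x ∈ Set.Icc (1/2:ℝ) 1, HasDerivWithinAt Efs (1-x) (Set.Icc (1/2) 1) x :=
    fun x hx => ((P2 x).hasDerivWithinAt).congr E2 (E2 hx)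
  have W3 : ∀ x ∈ Set.Ici (1:ℝ), HasDerivWithinAt Efs 0 (Set.Ici 1) x := fun x hx =>
    ((hasDerivAt_const x (1/4:ℝ)).hasDerivWithinAt).congr E3 (E3 hx)
  rcases lt_trichotomy u 0 with h | h | h
  · rw [e00_of_nonpos h.le]
    exact (W0 u h.le).hasDerivAt (Iic_mem_nhds h)
  · subst h
    rw [e00_of_nonpos le_rfl]
    have := (W0 0 (by norm_num)).union (W1 0 (by norm_num))
    rw [Set.Iic_union_Icc_eq_Iic (by norm_num)] at this
    exact this.hasDerivAt (Iic_mem_nhds (by norm_num))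
  rcases lt_trichotomy u (1/2) with h2 | h2 | h2
  · rw [e00_lo h.le h2.le]
    exact (W1 u ⟨h.le, h2.le⟩).hasDerivAt (Icc_mem_nhds h h2)
  · subst h2
    rw [e00_lo h.le le_rfl]
    have w2 : HasDerivWithinAt Efs (1/2) (Set.Icc (1/2:ℝ) 1) (1/2) := by
      have := W2 (1/2) (by norm_num); convert this using 1; norm_num
    have := (W1 (1/2) (by norm_num)).union w2
    rw [Set.Icc_union_Icc_eq_Icc (by norm_num) (by norm_num)] at this
    exact this.hasDerivAt (Icc_mem_nhds (by norm_num) (by norm_num))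
  rcases lt_trichotomy u 1 with h3 | h3 | h3
  · rw [e00_hi h2.le h3.le]
    exact (W2 u ⟨h2.le, h3.le⟩).hasDerivAt (Icc_mem_nhds h2 h3)
  · subst h3
    rw [e00_of_one_le le_rfl]
    have w2 : HasDerivWithinAt Efs 0 (Set.Icc (1/2:ℝ) 1) 1 := by
      have := W2 1 (by norm_num); convert this using 1; norm_num
    have := w2.union (W3 1 (by norm_num))
    rw [Set.Icc_union_Ici_eq_Ici (by norm_num)] at this
    exact this.hasDerivAt (Ici_mem_nhds (by norm_num))
  · rw [e00_of_one_le h3.le]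
    exact (W3 u h3.le).hasDerivAt (Ici_mem_nhds h3)

lemma sum_e00_le (v : ℝ) (N : ℕ) : ∑ k ∈ range N, e00 (v - k) ≤ 1/2 := by
  by_cases hv : 0 < v ∧ v < N
  · obtain ⟨hv0, hvN⟩ := hv
    set j : ℕ := ⌊v⌋.toNat with hj
    have hjv : (j : ℝ) = ⌊v⌋ := by
      rw [hj]; exact_mod_cast Int.toNat_of_nonneg (Int.floor_nonneg.mpr hv0.le)
    have hjle : (j:ℝ) ≤ v := hjv ▸ Int.floor_le v
    have hvlt : v < (j:ℝ) + 1 := by rw [hjv]; exact Int.lt_floor_add_one v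
    have hjN : j < N := by
      have : (j:ℝ) < (N:ℝ) := lt_of_le_of_lt hjle hvN
      exact_mod_cast this
    have heq : ∑ k ∈ range N, e00 (v - (k:ℝ)) = e00 (v - (j:ℝ)) := by
      apply Finset.sum_eq_single_of_mem j (mem_range.mpr hjN)
      intro k _ hk
      rcases lt_or_gt_of_ne hk with h | h
      · exact e00_of_one_le (by
          have : (k:ℝ) + 1 ≤ j := by exact_mod_cast h
          linarith)
      · exact e00_of_nonpos (by
          have : (j:ℝ) + 1 ≤ k := by exact_mod_cast h
          linarith)
    rw [heq]; exact e00_le_half _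
  · push_neg at hv
    have : ∀ k ∈ range N, e00 (v - k) = 0 := by
      intro k hk
      rcases le_or_gt v 0 with h | h
      · exact e00_of_nonpos (by
          have : (0:ℝ) ≤ k := Nat.cast_nonneg k
          linarith)
      · have hN : (N:ℝ) ≤ v := hv h
        have hk' : (k:ℝ) + 1 ≤ N := by exact_mod_cast mem_range.mp hk
        exact e00_of_one_le (by linarith)
    rw [Finset.sum_congr rfl this]; simp

lemma sum_Efs_lo (N j : ℕ) (hj : j ≤ N) (v : ℝ) (h1 : (j:ℝ) ≤ v) (h2 : v ≤ (j:ℝ) + 1/2)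
    (h3 : v ≤ (N:ℝ)) :
    ∑ k ∈ range N, Efs (v - k) = (j:ℝ)/4 + (v - j)^2/2 := by
  rcases eq_or_lt_of_le hj with rfl | hjN
  · have hv : v = (j:ℝ) := le_antisymm h3 h1
    subst hv
    rw [Finset.sum_congr rfl (fun k hk => Efs_of_one_le (by
      have : (k:ℝ) + 1 ≤ j := by exact_mod_cast mem_range.mp hk
      linarith))]
    simp only [Finset.sum_const, card_range, nsmul_eq_mul, sub_self]
    push_cast; ring
  · have hsub : range (j+1) ⊆ range N := Finset.range_subset_range.mpr hjN
    rw [← Finset.sum_subset hsub (fun k _ hk => Efs_of_nonpos (by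
      have : (j:ℝ) + 1 ≤ k := by exact_mod_cast Nat.lt_of_lt_of_le (Nat.lt_succ_self j) (Nat.le_of_not_lt (fun h => hk (mem_range.mpr h)))
      linarith))]
    rw [Finset.sum_range_succ]
    rw [Finset.sum_congr rfl (fun k hk => Efs_of_one_le (by
      have : (k:ℝ) + 1 ≤ j := by exact_mod_cast mem_range.mp hk
      linarith))]
    rw [Efs_lo (by linarith) (by linarith)]
    simp; ring

lemma sum_Efs_hi (N j : ℕ) (hj : j < N) (v : ℝ) (h1 : (j:ℝ) + 1/2 ≤ v) (h2 : v ≤ (j:ℝ) + 1) :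
    ∑ k ∈ range N, Efs (v - k) = (j:ℝ)/4 + 1/4 - (1 + j - v)^2/2 := by
  have hsub : range (j+1) ⊆ range N := Finset.range_subset_range.mpr hj
  rw [← Finset.sum_subset hsub (fun k _ hk => Efs_of_nonpos (by
    have : (j:ℝ) + 1 ≤ k := by exact_mod_cast Nat.lt_of_lt_of_le (Nat.lt_succ_self j) (Nat.le_of_not_lt (fun h => hk (mem_range.mpr h)))
    linarith))]
  rw [Finset.sum_range_succ]
  rw [Finset.sum_congr rfl (fun k hk => Efs_of_one_le (by
    have : (k:ℝ) + 1 ≤ j := by exact_mod_cast mem_range.mp hk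
    linarith))]
  rw [Efs_hi (by linarith) (by linarith)]
  simp; ring

/-- `∑_k E(2^m t - k)`. -/
noncomputable def Afs (m : ℕ) (t : ℝ) : ℝ := ∑ k ∈ range (2^m), Efs ((2:ℝ)^m * t - k)

/-- coefficient -/
noncomputable def cfs (R : ℝ) (m : ℕ) : ℝ :=
  2 ^ ((m : ℝ) * (1 / 2 - R)) * 2 ^ (-(m : ℝ) / 2) * ((2:ℝ)^m)⁻¹

lemma continuous_emk (m k : ℕ) : Continuous (emk m k) := by
  unfold emk
  exact continuous_const.mul (continuous_e00.comp (by continuity))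

lemma integral_emk (m k : ℕ) (t : ℝ) :
    ∫ s in (0:ℝ)..t, emk m k s
      = 2 ^ (-(m:ℝ)/2) * ((2:ℝ)^m)⁻¹ * Efs ((2:ℝ)^m * t - k) := by
  have hder : ∀ s : ℝ,
      HasDerivAt (fun s => 2 ^ (-(m:ℝ)/2) * ((2:ℝ)^m)⁻¹ * Efs ((2:ℝ)^m * s - k))
        (emk m k s) s := by
    intro s
    have h1 : HasDerivAt (fun s : ℝ => (2:ℝ)^m * s - (k:ℝ)) ((2:ℝ)^m) s := by
      simpa using ((hasDerivAt_id s).const_mul ((2:ℝ)^m)).sub_const (k:ℝ)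
    have h2 := (hasDerivAt_Efs ((2:ℝ)^m * s - k)).comp s h1
    have h3 := h2.const_mul (2 ^ (-(m:ℝ)/2) * ((2:ℝ)^m)⁻¹)
    have hne : ((2:ℝ)^m) ≠ 0 := by positivity
    refine h3.congr_deriv ?_
    unfold emk
    field_simp
  rw [intervalIntegral.integral_eq_sub_of_hasDerivAt (fun s _ => hder s)
    ((continuous_emk m k).intervalIntegrable 0 t)]
  rw [mul_zero, zero_sub]
  rw [Efs_of_nonpos (by simp : -(k:ℝ) ≤ 0)]
  ring

lemma integral_Fm (R : ℝ) (m : ℕ) (t : ℝ) :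
    ∫ s in (0:ℝ)..t, (∑ k ∈ range (2^m), 2 ^ ((m : ℝ) * (1 / 2 - R)) * emk m k s)
      = cfs R m * Afs m t := by
  rw [intervalIntegral.integral_finset_sum (f := fun k s => 2 ^ ((m : ℝ) * (1 / 2 - R)) * emk m k s)
    (fun k _ => (continuous_const.mul (continuous_emk m k)).intervalIntegrable 0 t)]
  unfold cfs Afs
  rw [Finset.mul_sum]
  congr 1 with k
  rw [intervalIntegral.integral_const_mul, integral_emk]
  ring

lemma rpow_half_mul (R : ℝ) (m : ℕ) :
    (2:ℝ) ^ ((m : ℝ) * (1 / 2 - R)) * 2 ^ (-(m : ℝ) / 2) = 2 ^ (-(m:ℝ) * R) := by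
  rw [← Real.rpow_add (by norm_num : (0:ℝ) < 2)]
  ring_nf

lemma Fm_bound (R : ℝ) (m : ℕ) (s : ℝ) :
    ‖∑ k ∈ range (2^m), 2 ^ ((m : ℝ) * (1 / 2 - R)) * emk m k s‖
      ≤ (2:ℝ) ^ (-(m:ℝ) * R) / 2 := by
  have hrw : ∑ k ∈ range (2^m), 2 ^ ((m : ℝ) * (1 / 2 - R)) * emk m k s
      = (2:ℝ) ^ (-(m:ℝ) * R) * ∑ k ∈ range (2^m), e00 ((2:ℝ)^m * s - k) := by
    rw [Finset.mul_sum]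
    congr 1 with k
    unfold emk
    rw [← mul_assoc, rpow_half_mul]
  rw [hrw, Real.norm_eq_abs, abs_of_nonneg (mul_nonneg (Real.rpow_nonneg (by norm_num) _) (Finset.sum_nonneg fun i _ => e00_nonneg _))]
  have h1 := sum_e00_le ((2:ℝ)^m * s) (2^m)
  have h2 : (0:ℝ) < (2:ℝ) ^ (-(m:ℝ) * R) := Real.rpow_pos_of_pos (by norm_num) _
  calc (2:ℝ) ^ (-(m:ℝ) * R) * ∑ k ∈ range (2^m), e00 ((2:ℝ)^m * s - k)
      ≤ (2:ℝ) ^ (-(m:ℝ) * R) * (1/2) := by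
        apply mul_le_mul_of_nonneg_left _ h2.le
        simpa using h1
    _ = (2:ℝ) ^ (-(m:ℝ) * R) / 2 := by ring

lemma summable_pow_neg (R : ℝ) (hR : 0 < R) : Summable (fun m : ℕ => (2:ℝ) ^ (-(m:ℝ) * R)) := by
  have h : ∀ m : ℕ, (2:ℝ) ^ (-(m:ℝ) * R) = ((2:ℝ) ^ (-R)) ^ m := by
    intro m
    rw [← Real.rpow_natCast ((2:ℝ) ^ (-R)) m, ← Real.rpow_mul (by norm_num : (0:ℝ) ≤ 2)]
    ring_nf
  simp_rw [h]
  exact summable_geometric_of_lt_one (Real.rpow_nonneg (by norm_num) _)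
    (Real.rpow_lt_one_of_one_lt_of_neg one_lt_two (by linarith))

lemma yR_eq (R : ℝ) (hR : 0 < R) {t : ℝ} (ht : 0 ≤ t) (ht1 : t ≤ 1) :
    yR R t = ∑' m : ℕ, cfs R m * Afs m t := by
  unfold yR takagiLandsberg
  rw [intervalIntegral.integral_of_le ht]
  have hint : ∀ m : ℕ, MeasureTheory.Integrable
      (fun s => ∑ k ∈ range (2^m), 2 ^ ((m : ℝ) * (1 / 2 - R)) * emk m k s)
      (MeasureTheory.volume.restrict (Set.Ioc 0 t)) := by
    intro m
    exact (Continuous.integrableOn_Ioc (by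
      exact continuous_finset_sum _ (fun k _ => continuous_const.mul (continuous_emk m k))))
  have hsum : Summable fun m : ℕ =>
      ∫ s in Set.Ioc (0:ℝ) t, ‖∑ k ∈ range (2^m), 2 ^ ((m : ℝ) * (1 / 2 - R)) * emk m k s‖ := by
    apply Summable.of_nonneg_of_le
      (fun m => MeasureTheory.integral_nonneg (fun s => norm_nonneg _))
      (fun m => ?_) ((summable_pow_neg R hR).div_const 2)
    calc ∫ s in Set.Ioc (0:ℝ) t, ‖∑ k ∈ range (2^m), 2 ^ ((m : ℝ) * (1 / 2 - R)) * emk m k s‖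
        ≤ ∫ _ in Set.Ioc (0:ℝ) t, ((2:ℝ) ^ (-(m:ℝ) * R) / 2) := by
          apply MeasureTheory.integral_mono ((hint m).norm) (MeasureTheory.integrable_const _)
          intro s
          exact Fm_bound R m s
      _ ≤ (2:ℝ) ^ (-(m:ℝ) * R) / 2 := by
          rw [MeasureTheory.setIntegral_const, smul_eq_mul, MeasureTheory.measureReal_def, Real.volume_Ioc]
          have h2 : (0:ℝ) < (2:ℝ) ^ (-(m:ℝ) * R) := Real.rpow_pos_of_pos (by norm_num) _
          rw [ENNReal.toReal_ofReal (by linarith)]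
          nlinarith
  rw [← MeasureTheory.integral_tsum_of_summable_integral_norm hint hsum]
  apply tsum_congr
  intro m
  rw [← intervalIntegral.integral_of_le ht, integral_Fm]

lemma Afs_eval_lo (m j : ℕ) (hj : j ≤ 2^m) (t v : ℝ) (hv : (2:ℝ)^m * t = v)
    (h1 : (j:ℝ) ≤ v) (h2 : v ≤ (j:ℝ) + 1/2) (h3 : v ≤ (2:ℝ)^m) :
    Afs m t = (j:ℝ)/4 + (v - j)^2/2 := by
  unfold Afs
  rw [hv]
  exact sum_Efs_lo (2^m) j hj v h1 h2 (by push_cast; exact h3)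

lemma Afs_eval_hi (m j : ℕ) (hj : j < 2^m) (t v : ℝ) (hv : (2:ℝ)^m * t = v)
    (h1 : (j:ℝ) + 1/2 ≤ v) (h2 : v ≤ (j:ℝ) + 1) :
    Afs m t = (j:ℝ)/4 + 1/4 - (1 + j - v)^2/2 := by
  unfold Afs
  rw [hv]
  exact sum_Efs_hi (2^m) j hj v h1 h2

lemma Lkey (n k m : ℕ) (hk : k < 2^n) :
    Afs m ((4*(k:ℝ))/2^(n+2)) - 2 * Afs m ((4*(k:ℝ)+1)/2^(n+2))
      + 2 * Afs m ((4*(k:ℝ)+3)/2^(n+2)) - Afs m ((4*(k:ℝ)+4)/2^(n+2))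
      = if m = n then 1/8 else 0 := by
  have hkR : (k:ℝ) + 1 ≤ (2:ℝ)^n := by exact_mod_cast hk
  have h2n2 : ((2:ℝ))^(n+2) ≠ 0 := by positivity
  rcases lt_trichotomy m n with hmn | rfl | hmn
  · -- m < n : all four points in one quadratic piece
    rw [if_neg (Nat.ne_of_lt hmn)]
    obtain ⟨p, rfl⟩ : ∃ p, n = m + p + 1 := ⟨n - m - 1, by omega⟩
    set q : ℕ := k / 2^p with hq
    set r : ℕ := k % 2^p with hr
    have hkqr : 2^p * q + r = k := Nat.div_add_mod k (2^p)
    have hrlt : r < 2^p := Nat.mod_lt _ (Nat.two_pow_pos p)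
    have hqlt : q < 2^(m+1) := by
      apply Nat.div_lt_of_lt_mul
      calc k < 2^(m+p+1) := hk
        _ = 2^p * 2^(m+1) := by ring
    have hrR : (r:ℝ) + 1 ≤ (2:ℝ)^p := by exact_mod_cast hrlt
    have hp0 : (0:ℝ) < (2:ℝ)^p := by positivity
    have hkR' : (k:ℝ) = 2^p * q + r := by exact_mod_cast hkqr.symm
    set c : ℝ := ((2:ℝ)^p * 8)⁻¹ with hc
    have hinv : ((2:ℝ)^p * 8) * c = 1 := mul_inv_cancel₀ (by positivity)
    have hc0 : 0 < c := by rw [hc]; positivity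
    have hcb : ∀ i : ℝ, 0 ≤ i → i ≤ 4 → (4*(r:ℝ) + i) * c ≤ 1/2 := by
      intro i hi0 hi4
      have h4 : 4*(r:ℝ) + i ≤ 4 * (2:ℝ)^p := by linarith
      nlinarith [mul_le_mul_of_nonneg_right h4 hc0.le]
    have hcnn : ∀ i : ℝ, 0 ≤ i → 0 ≤ (4*(r:ℝ) + i) * c := by
      intro i hi0
      have : (0:ℝ) ≤ 4*(r:ℝ) + i := by positivity
      positivity
    have hm0 : ((2:ℝ))^m ≠ 0 := by positivity
    rcases Nat.even_or_odd q with ⟨j, hj⟩ | ⟨j, hj⟩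
    · -- even q = j + j
      have hjlt : j < 2^m := by
        have h2 : 2^(m+1) = 2 * 2^m := by ring
        omega
      have hjR : (j:ℝ) + 1 ≤ (2:ℝ)^m := by exact_mod_cast hjlt
      have hqR : (q:ℝ) = 2*j := by rw [hj]; push_cast; ring
      have hv : ∀ i : ℝ, (2:ℝ)^m * ((4*(k:ℝ)+i)/2^(m+p+1+2)) = (j:ℝ) + (4*(r:ℝ)+i)*c := by
        intro i
        rw [hkR', hqR, hc]
        field_simp
        ring
      have ev : ∀ i : ℝ, 0 ≤ i → i ≤ 4 →
          Afs m ((4*(k:ℝ)+i)/2^(m+p+1+2)) = (j:ℝ)/4 + ((4*(r:ℝ)+i)*c)^2/2 := by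
        intro i hi0 hi4
        rw [Afs_eval_lo m j hjlt.le _ ((j:ℝ) + (4*(r:ℝ)+i)*c) (hv i)
          (by linarith [hcnn i hi0]) (by linarith [hcb i hi0 hi4])
          (by linarith [hcb i hi0 hi4])]
        ring
      have e0 := ev 0 (by norm_num) (by norm_num)
      have e1 := ev 1 (by norm_num) (by norm_num)
      have e3 := ev 3 (by norm_num) (by norm_num)
      have e4 := ev 4 (by norm_num) (by norm_num)
      rw [show (4*(k:ℝ))/2^(m+p+1+2) = (4*(k:ℝ)+0)/2^(m+p+1+2) by ring] at *
      rw [e0, e1, e3, e4]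
      ring
    · -- odd q = 2j+1
      have hjlt : j < 2^m := by
        have h2 : 2^(m+1) = 2 * 2^m := by ring
        omega
      have hqR : (q:ℝ) = 2*j + 1 := by rw [hj]; push_cast; ring
      have hv : ∀ i : ℝ, (2:ℝ)^m * ((4*(k:ℝ)+i)/2^(m+p+1+2))
          = (j:ℝ) + 1/2 + (4*(r:ℝ)+i)*c := by
        intro i
        rw [hkR', hqR, hc]
        field_simp
        ring
      have ev : ∀ i : ℝ, 0 ≤ i → i ≤ 4 →
          Afs m ((4*(k:ℝ)+i)/2^(m+p+1+2))
            = (j:ℝ)/4 + 1/4 - (1/2 - (4*(r:ℝ)+i)*c)^2/2 := by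
        intro i hi0 hi4
        rw [Afs_eval_hi m j hjlt _ ((j:ℝ) + 1/2 + (4*(r:ℝ)+i)*c) (hv i)
          (by linarith [hcnn i hi0]) (by linarith [hcb i hi0 hi4])]
        ring
      have e0 := ev 0 (by norm_num) (by norm_num)
      have e1 := ev 1 (by norm_num) (by norm_num)
      have e3 := ev 3 (by norm_num) (by norm_num)
      have e4 := ev 4 (by norm_num) (by norm_num)
      rw [show (4*(k:ℝ))/2^(m+p+1+2) = (4*(k:ℝ)+0)/2^(m+p+1+2) by ring] at *
      rw [e0, e1, e3, e4]
      ring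
  · -- m = n
    rw [if_pos rfl]
    have hv : ∀ i : ℝ, (2:ℝ)^m * ((4*(k:ℝ)+i)/2^(m+2)) = (k:ℝ) + i/4 := by
      intro i
      field_simp
      ring
    have e0 := Afs_eval_lo m k hk.le _ ((k:ℝ) + 0/4) (hv 0) (by norm_num)
      (by norm_num) (by norm_num; linarith)
    have e1 := Afs_eval_lo m k hk.le _ ((k:ℝ) + 1/4) (hv 1) (by norm_num)
      (by norm_num) (by linarith)
    have e3 := Afs_eval_hi m k hk _ ((k:ℝ) + 3/4) (hv 3) (by linarith) (by linarith)
    have e4 := Afs_eval_lo m (k+1) hk _ ((k:ℝ) + 4/4) (hv 4)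
      (by push_cast; norm_num) (by push_cast; norm_num) (by push_cast; linarith)
    rw [show (4*(k:ℝ))/2^(m+2) = (4*(k:ℝ)+0)/2^(m+2) by ring] at *
    rw [e0, e1, e3, e4]
    push_cast
    ring
  · -- m > n
    rw [if_neg (Nat.ne_of_gt hmn)]
    obtain ⟨p, rfl⟩ : ∃ p, m = n + p + 1 := ⟨m - n - 1, by omega⟩
    cases p with
    | zero =>
      -- m = n+1
      have h2R : (2:ℝ)^(n+0+1) = 2 * 2^n := by ring
      have hN : 2^(n+0+1) = 2*2^n := by ring
      have hv : ∀ i : ℝ, (2:ℝ)^(n+0+1) * ((4*(k:ℝ)+i)/2^(n+2)) = (2*(k:ℝ) + i/2) := by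
        intro i
        field_simp
        ring
      have e0 := Afs_eval_lo (n+0+1) (2*k) (by omega) _ (2*(k:ℝ) + 0/2) (hv 0)
        (by push_cast; norm_num) (by push_cast; norm_num)
        (by push_cast; rw [h2R]; norm_num; linarith)
      have e1 := Afs_eval_lo (n+0+1) (2*k) (by omega) _ (2*(k:ℝ) + 1/2) (hv 1)
        (by push_cast; norm_num) (by push_cast; norm_num)
        (by push_cast; rw [h2R]; linarith)
      have e3 := Afs_eval_hi (n+0+1) (2*k+1) (by omega) _ (2*(k:ℝ) + 3/2) (hv 3)
        (by push_cast; linarith) (by push_cast; linarith)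
      have e4 := Afs_eval_lo (n+0+1) (2*k+2) (by omega) _ (2*(k:ℝ) + 4/2) (hv 4)
        (by push_cast; norm_num) (by push_cast; norm_num)
        (by push_cast; rw [h2R]; linarith)
      rw [show (4*(k:ℝ))/2^(n+2) = (4*(k:ℝ)+0)/2^(n+2) by ring] at *
      rw [e0, e1, e3, e4]
      push_cast
      ring
    | succ s =>
      -- m = n+s+2, v_i = (4k+i)*2^s  (integers)
      have hjle : ∀ i : ℕ, i ≤ 4 → (4*k+i)*2^s ≤ 2^(n+(s+1)+1) := by
        intro i hi
        have h1 : 4*k+i ≤ 4*2^n := by omega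
        calc (4*k+i)*2^s ≤ (4*2^n)*2^s := Nat.mul_le_mul_right _ h1
          _ = 2^(n+(s+1)+1) := by ring
      have hv : ∀ i : ℕ, (2:ℝ)^(n+(s+1)+1) * ((4*(k:ℝ)+i)/2^(n+2))
          = ((((4*k+i)*2^s : ℕ)):ℝ) := by
        intro i
        push_cast
        field_simp
        ring
      have ev : ∀ i : ℕ, i ≤ 4 → Afs (n+(s+1)+1) ((4*(k:ℝ)+i)/2^(n+2))
          = (((4*k+i)*2^s : ℕ):ℝ)/4 := by
        intro i hi
        rw [Afs_eval_lo (n+(s+1)+1) ((4*k+i)*2^s) (hjle i hi) _ _ (hv i)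
          le_rfl (by norm_num) (by exact_mod_cast hjle i hi)]
        ring
      have e0 := ev 0 (by norm_num)
      have e1 := ev 1 (by norm_num)
      have e3 := ev 3 (by norm_num)
      have e4 := ev 4 (by norm_num)
      push_cast at e0 e1 e3 e4
      rw [show (4*(k:ℝ))/2^(n+2) = (4*(k:ℝ)+0)/2^(n+2) by ring] at *
      rw [e0, e1, e3, e4]
      push_cast
      ring

lemma cfs_nonneg (R : ℝ) (m : ℕ) : 0 ≤ cfs R m := by
  unfold cfs
  positivity

lemma Afs_nonneg (m : ℕ) (t : ℝ) : 0 ≤ Afs m t :=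
  Finset.sum_nonneg fun i _ => Efs_nonneg _

lemma Afs_le (m : ℕ) (t : ℝ) : Afs m t ≤ (2:ℝ)^m / 4 := by
  unfold Afs
  calc ∑ k ∈ range (2^m), Efs ((2:ℝ)^m * t - k) ≤ ∑ _k ∈ range (2^m), (1/4:ℝ) :=
        Finset.sum_le_sum fun i _ => Efs_le _
    _ = (2:ℝ)^m / 4 := by
        rw [Finset.sum_const, card_range, nsmul_eq_mul]
        push_cast
        ring

lemma summable_cA (R : ℝ) (hR : 0 < R) (t : ℝ) : Summable (fun m : ℕ => cfs R m * Afs m t) := by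
  apply Summable.of_nonneg_of_le
    (fun m => mul_nonneg (cfs_nonneg R m) (Afs_nonneg m t))
    (fun m => ?_) ((summable_pow_neg R hR).div_const 4)
  have h1 : cfs R m * Afs m t ≤ cfs R m * ((2:ℝ)^m / 4) :=
    mul_le_mul_of_nonneg_left (Afs_le m t) (cfs_nonneg R m)
  have h2 : cfs R m * ((2:ℝ)^m / 4) = (2:ℝ) ^ (-(m:ℝ) * R) / 4 := by
    unfold cfs
    have hne : ((2:ℝ)^m) ≠ 0 := by positivity
    rw [show (2:ℝ)^((m:ℝ)*(1/2-R)) * 2^(-(m:ℝ)/2) * ((2:ℝ)^m)⁻¹ * ((2:ℝ)^m/4)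
        = (2:ℝ)^((m:ℝ)*(1/2-R)) * 2^(-(m:ℝ)/2) * (((2:ℝ)^m)⁻¹ * (2:ℝ)^m) / 4 by ring,
      inv_mul_cancel₀ hne, rpow_half_mul]
    ring
  linarith [h1, h2.le]

lemma vartheta_eq (R : ℝ) (hR : 0 < R) (n k : ℕ) (hk : k < 2^n) :
    vartheta (yR R) n k = 2 ^ ((n : ℝ) * (1 / 2 - R)) := by
  have h2n : (0:ℝ) < (2:ℝ)^(n+2) := by positivity
  have hkR : (k:ℝ) + 1 ≤ (2:ℝ)^n := by exact_mod_cast hk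
  have h4 : (2:ℝ)^(n+2) = 4 * 2^n := by ring
  have mem : ∀ i : ℝ, 0 ≤ i → i ≤ 4 → 0 ≤ (4*(k:ℝ)+i)/2^(n+2) ∧ (4*(k:ℝ)+i)/2^(n+2) ≤ 1 := by
    intro i hi0 hi4
    constructor
    · apply div_nonneg _ h2n.le
      positivity
    · rw [div_le_one h2n, h4]
      linarith
  unfold vartheta
  rw [yR_eq R hR (t := 4*(k:ℝ)/2^(n+2)) (by positivity) (by rw [div_le_one h2n, h4]; linarith),
      yR_eq R hR (mem 1 (by norm_num) (by norm_num)).1 (mem 1 (by norm_num) (by norm_num)).2,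
      yR_eq R hR (mem 3 (by norm_num) (by norm_num)).1 (mem 3 (by norm_num) (by norm_num)).2,
      yR_eq R hR (mem 4 (by norm_num) (by norm_num)).1 (mem 4 (by norm_num) (by norm_num)).2]
  have ha := summable_cA R hR ((4*(k:ℝ))/2^(n+2))
  have hb := (summable_cA R hR ((4*(k:ℝ)+1)/2^(n+2))).mul_left 2
  have hc := (summable_cA R hR ((4*(k:ℝ)+3)/2^(n+2))).mul_left 2
  have hd := summable_cA R hR ((4*(k:ℝ)+4)/2^(n+2))
  have hcomb : (∑' m, cfs R m * Afs m ((4*(k:ℝ))/2^(n+2)))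
      - 2 * (∑' m, cfs R m * Afs m ((4*(k:ℝ)+1)/2^(n+2)))
      + 2 * (∑' m, cfs R m * Afs m ((4*(k:ℝ)+3)/2^(n+2)))
      - (∑' m, cfs R m * Afs m ((4*(k:ℝ)+4)/2^(n+2)))
      = ∑' m : ℕ, (cfs R m * Afs m ((4*(k:ℝ))/2^(n+2))
          - 2 * (cfs R m * Afs m ((4*(k:ℝ)+1)/2^(n+2)))
          + 2 * (cfs R m * Afs m ((4*(k:ℝ)+3)/2^(n+2)))
          - cfs R m * Afs m ((4*(k:ℝ)+4)/2^(n+2))) := by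
    rw [← tsum_mul_left, ← tsum_mul_left, ← Summable.tsum_sub ha hb, ← Summable.tsum_add (ha.sub hb) hc,
      ← Summable.tsum_sub ((ha.sub hb).add hc) hd]
  have hpt : ∀ m : ℕ, (cfs R m * Afs m ((4*(k:ℝ))/2^(n+2))
          - 2 * (cfs R m * Afs m ((4*(k:ℝ)+1)/2^(n+2)))
          + 2 * (cfs R m * Afs m ((4*(k:ℝ)+3)/2^(n+2)))
          - cfs R m * Afs m ((4*(k:ℝ)+4)/2^(n+2)))
      = cfs R m * (if m = n then (1/8:ℝ) else 0) := by
    intro m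
    rw [← Lkey n k m hk]
    ring
  have htsum : (∑' m : ℕ, (cfs R m * Afs m ((4*(k:ℝ))/2^(n+2))
          - 2 * (cfs R m * Afs m ((4*(k:ℝ)+1)/2^(n+2)))
          + 2 * (cfs R m * Afs m ((4*(k:ℝ)+3)/2^(n+2)))
          - cfs R m * Afs m ((4*(k:ℝ)+4)/2^(n+2))))
      = cfs R n * (1/8) := by
    rw [tsum_congr hpt]
    rw [tsum_eq_single n (fun m hm => by rw [if_neg hm, mul_zero])]
    rw [if_pos rfl]
  rw [hcomb, htsum]
  unfold cfs
  have hn2 : ((2:ℝ)^n)⁻¹ = (2:ℝ) ^ (-(n:ℝ)) := by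
    rw [← Real.rpow_natCast 2 n, ← Real.rpow_neg (by norm_num)]
  rw [hn2]
  rw [show (1/8:ℝ) = (2:ℝ)^(-3:ℝ) from by
      rw [show (-3:ℝ) = -((3:ℕ):ℝ) by norm_num, Real.rpow_neg (by norm_num),
        Real.rpow_natCast]
      norm_num]
  simp only [← Real.rpow_add (show (0:ℝ) < 2 by norm_num)]
  congr 1
  ring

theorem stmt4 (R : ℝ) (hR : R ∈ Set.Ioc (0 : ℝ) 1) :
    (∀ n k : ℕ, k < 2 ^ n → vartheta (yR R) n k = 2 ^ ((n : ℝ) * (1 / 2 - R))) ∧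
    (∀ n : ℕ, n ≠ 0 → Rhat (yR R) n = R) := by
  obtain ⟨hR0, hR1⟩ := hR
  refine ⟨fun n k hk => vartheta_eq R hR0 n k hk, fun n hn => ?_⟩
  unfold Rhat
  have hsum : (∑ k ∈ range (2 ^ n), (vartheta (yR R) n k) ^ 2)
      = (2:ℝ) ^ ((n:ℝ) * (2 - 2*R)) := by
    rw [Finset.sum_congr rfl (fun k hk =>
      by rw [vartheta_eq R hR0 n k (mem_range.mp hk)])]
    rw [Finset.sum_const, card_range, nsmul_eq_mul]
    rw [sq, ← Real.rpow_add (by norm_num : (0:ℝ) < 2)]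
    rw [show ((2^n : ℕ) : ℝ) = (2:ℝ) ^ ((n:ℕ):ℝ) by push_cast; rw [Real.rpow_natCast]]
    rw [← Real.rpow_add (by norm_num : (0:ℝ) < 2)]
    congr 1
    ring
  rw [hsum]
  rw [Real.sqrt_eq_rpow, ← Real.rpow_mul (by norm_num : (0:ℝ) ≤ 2)]
  rw [show ((n:ℝ) * (2 - 2*R)) * (1/2) = (n:ℝ) * (1 - R) by ring]
  rw [Real.logb_rpow (by norm_num) (by norm_num)]
  have hnR : (n:ℝ) ≠ 0 := Nat.cast_ne_zero.mpr hn
  field_simp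
  ring
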